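/- For all a, b ∈ ℕ and all (possibly empty) indices 𝔞, 𝔟, the following congruence holds in 𝓔 modulo 𝔄: (y_a e(x_𝔞)) * (y_b e(x_𝔟)) ≡ y_a(e(x_𝔞) * (y_b e(x_𝔟))) + y_b((y_a e(x_𝔞)) * e(x_𝔟)) + y_{a+b}(e(x_𝔞) * e(x_𝔟)) + Σ_{i+j=a+b, (q−1)∣j} Δ^{i,j}_{a,b} y_i((e(x_𝔞) * e(x_𝔟)) * e(x_j)) (mod 𝔄), where e(x_j) = x_j + y_j and y_a(−) denotes left concatenation by the letter y_a extended 𝔽_p-linearly. -/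

import Mathlib

/-- `Δ^{i,j}_{a,b} = (-1)^{a-1} C(j-1,a-1) + (-1)^{b-1} C(j-1,b-1) ∈ 𝔽_p`. -/
def Del (p : ℕ) (a b i j : ℕ) : ZMod p :=
  (-1 : ZMod p) ^ (a - 1) * ((j - 1).choose (a - 1) : ZMod p) +
    (-1 : ZMod p) ^ (b - 1) * ((j - 1).choose (b - 1) : ZMod p)

/-- A word of the monoid `𝒯` (the free monoid on the letters `x_k, y_ℓ`, `k, ℓ ∈ ℕ+`,
modulo the commutation relations `x_k y_ℓ = y_ℓ x_k`): since every `x`-letter commutes with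
every `y`-letter, a word has the unique normal form `x_𝔲 y_𝔳`, and is encoded as the pair
of lists `(𝔲, 𝔳)`. -/
abbrev EWord := List ℕ+ × List ℕ+

/-- The `𝔽_p`-vector space `𝓔` with basis `𝒯`. -/
abbrev ESp (p : ℕ) := EWord →₀ ZMod p

/-- The basis word `x_𝔲 y_𝔳` of `𝓔`. -/
noncomputable def ew (p : ℕ) (z : EWord) : ESp p := Finsupp.single z 1

/-- Left concatenation by the letter `x_a`, extended `𝔽_p`-linearly. -/
noncomputable def xcons (p : ℕ) (a : ℕ+) (r : ESp p) : ESp p :=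
  Finsupp.mapDomain (fun z => (a :: z.1, z.2)) r

/-- Left concatenation by the letter `y_a`, extended `𝔽_p`-linearly. -/
noncomputable def ycons (p : ℕ) (a : ℕ+) (r : ESp p) : ESp p :=
  Finsupp.mapDomain (fun z => (z.1, a :: z.2)) r

/-- `∑_{i+j = a+b, i,j ≥ 1, (q-1) ∣ j} f i j`. -/
noncomputable def decSum {M : Type*} [AddCommMonoid M] (q : ℕ) (a b : ℕ+)
    (f : ℕ+ → ℕ+ → M) : M :=
  ∑ j ∈ (Finset.Ioo 0 ((a : ℕ) + (b : ℕ))).attach,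
    if (q - 1) ∣ (j : ℕ) then
      f ⟨(a : ℕ) + (b : ℕ) - (j : ℕ), by
            have h := Finset.mem_Ioo.mp j.2; omega⟩
        ⟨(j : ℕ), (Finset.mem_Ioo.mp j.2).1⟩
    else 0

/-- Fuelled version of the `q`-shuffle product `*` on `𝓔`, on basis words, following the
inductive definition (induction on the sum of the depths):
(1) `1 * 𝔞 = 𝔞 * 1 = 𝔞`;
(2) `x_𝔞 * y_𝔟 = x_𝔞 y_𝔟 = y_𝔟 x_𝔞 = y_𝔟 * x_𝔞`;
(3) `x_𝔞 * x_𝔟 = x_{a₁}(x_{𝔞⁽¹⁾} * x_𝔟) + x_{b₁}(x_𝔞 * x_{𝔟⁽¹⁾}) + x_{a₁+b₁}(x_{𝔞⁽¹⁾} * x_{𝔟⁽¹⁾})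
     + ∑_{i+j=a₁+b₁, (q-1)∣j} Δ^{i,j}_{a₁,b₁} x_i((x_{𝔞⁽¹⁾} * x_{𝔟⁽¹⁾}) * x_j)`;
(4) `y_𝔞 * y_𝔟 = y_{a₁}(y_{𝔞⁽¹⁾} * y_𝔟) + y_{b₁}(y_𝔞 * y_{𝔟⁽¹⁾}) + y_{a₁+b₁}(y_{𝔞⁽¹⁾} * y_{𝔟⁽¹⁾})
     + ∑_{i+j=a₁+b₁, (q-1)∣j} Δ^{i,j}_{a₁,b₁} y_i((y_{𝔞⁽¹⁾} * y_{𝔟⁽¹⁾}) * x_j)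
     + ∑_{i+j=a₁+b₁, (q-1)∣j} Δ^{i,j}_{a₁,b₁} y_i((y_{𝔞⁽¹⁾} * y_{𝔟⁽¹⁾}) * y_j)`;
(5) `(x_𝔞 y_𝔟) * (x_{𝔞'} y_{𝔟'}) = (x_𝔞 * x_{𝔞'}) * (y_𝔟 * y_{𝔟'})`,
with `*` extended `𝔽_p`-bilinearly.  For sufficient fuel (which `mulE` below always
supplies) the recursion terminates, since each step strictly decreases the total depth. -/
noncomputable def mulF (p q : ℕ) : ℕ → EWord → EWord → ESp p
  | 0, _, _ => 0
  | _ + 1, ([], []), z => ew p z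
  | _ + 1, w, ([], []) => ew p w
  | _ + 1, (u, []), ([], v) => ew p (u, v)
  | _ + 1, ([], v), (u, []) => ew p (u, v)
  | n + 1, (a :: as, []), (b :: bs, []) =>
      xcons p a (mulF p q n (as, []) (b :: bs, [])) +
        xcons p b (mulF p q n (a :: as, []) (bs, [])) +
        xcons p (a + b) (mulF p q n (as, []) (bs, [])) +
        decSum q a b (fun i j =>
          Del p (a : ℕ) (b : ℕ) (i : ℕ) (j : ℕ) •
            xcons p i ((mulF p q n (as, []) (bs, [])).sum fun w c => c • mulF p q n w ([j], [])))
  | n + 1, ([], a :: as), ([], b :: bs) =>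
      ycons p a (mulF p q n ([], as) ([], b :: bs)) +
        ycons p b (mulF p q n ([], a :: as) ([], bs)) +
        ycons p (a + b) (mulF p q n ([], as) ([], bs)) +
        decSum q a b (fun i j =>
          Del p (a : ℕ) (b : ℕ) (i : ℕ) (j : ℕ) •
            ycons p i ((mulF p q n ([], as) ([], bs)).sum fun w c =>
              c • mulF p q n w ([j], []))) +
        decSum q a b (fun i j =>
          Del p (a : ℕ) (b : ℕ) (i : ℕ) (j : ℕ) •
            ycons p i ((mulF p q n ([], as) ([], bs)).sum fun w c =>
              c • mulF p q n w ([], [j])))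
  | n + 1, (u, v), (u', v') =>
      (mulF p q n (u, []) (u', [])).sum fun w c =>
        (mulF p q n ([], v) ([], v')).sum fun z e => (c * e) • mulF p q n w z

/-- The `q`-shuffle product of two basis words of `𝓔`.  The fuel
`2 (|𝔲| + |𝔳| + |𝔲'| + |𝔳'|) + 8` always suffices for the recursion. -/
noncomputable def mulW (p q : ℕ) (w z : EWord) : ESp p :=
  mulF p q (2 * (w.1.length + w.2.length + z.1.length + z.2.length) + 8) w z

/-- The `q`-shuffle product `*` on `𝓔`, the `𝔽_p`-bilinear extension of `mulW`. -/
noncomputable def mulE (p q : ℕ) (r s : ESp p) : ESp p :=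
  r.sum fun w c => s.sum fun z e => (c * e) • mulW p q w z

/-- Membership in the ideal `𝔄` of the (commutative, not necessarily associative)
`𝔽_p`-algebra `(𝓔, *)` generated by all associators `(𝔞*𝔟)*𝔠 - 𝔞*(𝔟*𝔠)`. -/
inductive InA (p q : ℕ) : ESp p → Prop
  | assoc (a b c : ESp p) :
      InA p q (mulE p q (mulE p q a b) c - mulE p q a (mulE p q b c))
  | zero : InA p q 0
  | add {a b : ESp p} : InA p q a → InA p q b → InA p q (a + b)
  | smul (c : ZMod p) {a : ESp p} : InA p q a → InA p q (c • a)
  | mul_left (x : ESp p) {a : ESp p} : InA p q a → InA p q (mulE p q x a)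
  | mul_right (x : ESp p) {a : ESp p} : InA p q a → InA p q (mulE p q a x)

/-- The `𝔽_p`-linear map `e : ℛ → 𝓔` on basis words: for an index `𝔞` of depth `m`,
`e(x_𝔞) = x_𝔞 + ∑_{i=1}^{m} x_{𝔞⁽ⁱ⁾} y_{𝔞₍ᵢ₎}`. -/
noncomputable def eWord (p : ℕ) (l : List ℕ+) : ESp p :=
  ∑ i ∈ Finset.range (l.length + 1), ew p (l.drop i, l.take i)

section Infra
variable (p q : ℕ)

/-! ### linearity of ycons, xcons -/

theorem ycons_zero (c : ℕ+) : ycons p c 0 = 0 := Finsupp.mapDomain_zero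

theorem ycons_add (c : ℕ+) (r s : ESp p) :
    ycons p c (r + s) = ycons p c r + ycons p c s := Finsupp.mapDomain_add

theorem ycons_smul (c : ℕ+) (k : ZMod p) (r : ESp p) :
    ycons p c (k • r) = k • ycons p c r := Finsupp.mapDomain_smul _ _

theorem ycons_sub (c : ℕ+) (r s : ESp p) :
    ycons p c (r - s) = ycons p c r - ycons p c s := by
  have : r - s = r + (-1 : ZMod p) • s := by simp [sub_eq_add_neg]
  rw [this, ycons_add, ycons_smul]; simp [sub_eq_add_neg]

theorem ycons_single (c : ℕ+) (z : EWord) (k : ZMod p) :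
    ycons p c (Finsupp.single z k) = Finsupp.single (z.1, c :: z.2) k :=
  Finsupp.mapDomain_single

theorem ycons_ew (c : ℕ+) (z : EWord) :
    ycons p c (ew p z) = ew p (z.1, c :: z.2) := Finsupp.mapDomain_single

theorem ycons_finset_sum {ι : Type*} (c : ℕ+) (s : Finset ι) (f : ι → ESp p) :
    ycons p c (∑ i ∈ s, f i) = ∑ i ∈ s, ycons p c (f i) := by
  classical
  induction s using Finset.induction with
  | empty => simp [ycons_zero]
  | insert _ _ h ih => rw [Finset.sum_insert h, ycons_add, ih, Finset.sum_insert h]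

/-! ### bilinearity of mulE -/

theorem mulE_def (r s : ESp p) :
    mulE p q r s = r.sum fun w c => s.sum fun z e => (c * e) • mulW p q w z := rfl

theorem mulE_zero_left (s : ESp p) : mulE p q 0 s = 0 := Finsupp.sum_zero_index

theorem mulE_zero_right (r : ESp p) : mulE p q r 0 = 0 := by
  rw [mulE_def]
  simp [Finsupp.sum_zero_index, Finsupp.sum]

theorem mulE_add_left (r r' s : ESp p) :
    mulE p q (r + r') s = mulE p q r s + mulE p q r' s := by
  rw [mulE_def, mulE_def, mulE_def]
  apply Finsupp.sum_add_index' <;> intro w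
  · simp
  · intro c c'
    rw [← Finsupp.sum_add]
    congr 1; funext z e
    rw [add_mul, add_smul]

theorem mulE_add_right (r s s' : ESp p) :
    mulE p q r (s + s') = mulE p q r s + mulE p q r s' := by
  rw [mulE_def, mulE_def, mulE_def, ← Finsupp.sum_add]
  congr 1; funext w c
  apply Finsupp.sum_add_index' <;> intro z
  · simp
  · intro e e'
    rw [mul_add, add_smul]

theorem mulE_smul_left (k : ZMod p) (r s : ESp p) :
    mulE p q (k • r) s = k • mulE p q r s := by
  rw [mulE_def, mulE_def, Finsupp.smul_sum]
  rw [Finsupp.sum_smul_index' (by intro w; simp)]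
  congr 1; funext w c
  rw [Finsupp.smul_sum]
  congr 1; funext z e
  rw [smul_eq_mul, mul_assoc, mul_smul]

theorem mulE_smul_right (k : ZMod p) (r s : ESp p) :
    mulE p q r (k • s) = k • mulE p q r s := by
  rw [mulE_def, mulE_def, Finsupp.smul_sum]
  congr 1; funext w c
  rw [Finsupp.smul_sum]
  rw [Finsupp.sum_smul_index' (by intro z; simp)]
  congr 1; funext z e
  rw [smul_eq_mul, show c * (k * e) = k * (c * e) by ring, mul_smul]

theorem mulE_sub_left (r r' s : ESp p) :
    mulE p q (r - r') s = mulE p q r s - mulE p q r' s := by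
  have : r - r' = r + (-1 : ZMod p) • r' := by simp [sub_eq_add_neg]
  rw [this, mulE_add_left, mulE_smul_left]; simp [sub_eq_add_neg]

theorem mulE_sub_right (r s s' : ESp p) :
    mulE p q r (s - s') = mulE p q r s - mulE p q r s' := by
  have : s - s' = s + (-1 : ZMod p) • s' := by simp [sub_eq_add_neg]
  rw [this, mulE_add_right, mulE_smul_right]; simp [sub_eq_add_neg]

theorem mulE_sum_left {ι : Type*} (t : Finset ι) (f : ι → ESp p) (s : ESp p) :
    mulE p q (∑ i ∈ t, f i) s = ∑ i ∈ t, mulE p q (f i) s := by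
  classical
  induction t using Finset.induction with
  | empty => simp [mulE_zero_left]
  | insert _ _ h ih => rw [Finset.sum_insert h, mulE_add_left, ih, Finset.sum_insert h]

theorem mulE_sum_right {ι : Type*} (t : Finset ι) (r : ESp p) (f : ι → ESp p) :
    mulE p q r (∑ i ∈ t, f i) = ∑ i ∈ t, mulE p q r (f i) := by
  classical
  induction t using Finset.induction with
  | empty => simp [mulE_zero_right]
  | insert _ _ h ih => rw [Finset.sum_insert h, mulE_add_right, ih, Finset.sum_insert h]

theorem mulE_ew_ew (w z : EWord) : mulE p q (ew p w) (ew p z) = mulW p q w z := by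
  rw [mulE_def, ew, ew, Finsupp.sum_single_index (by simp [Finsupp.sum_single_index]),
    Finsupp.sum_single_index (by simp)]
  simp

theorem mulE_ew_right (r : ESp p) (z : EWord) :
    mulE p q r (ew p z) = r.sum fun w c => c • mulW p q w z := by
  rw [mulE_def]
  congr 1; funext w c
  rw [ew, Finsupp.sum_single_index (by simp)]
  simp

theorem mulE_ew_left (w : EWord) (s : ESp p) :
    mulE p q (ew p w) s = s.sum fun z e => e • mulW p q w z := by
  rw [mulE_def, ew, Finsupp.sum_single_index (by simp [Finsupp.sum_single_index])]
  simp

end Infra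
section Supp
variable (p q : ℕ)

/-- Total depth of a word. -/
def dep (w : EWord) : ℕ := w.1.length + w.2.length

theorem supp_xcons {p : ℕ} {a : ℕ+} {r : ESp p} {t : EWord}
    (h : t ∈ (xcons p a r).support) : ∃ s ∈ r.support, t = (a :: s.1, s.2) := by
  classical
  have := Finsupp.mapDomain_support h
  simpa [eq_comm] using Finset.mem_image.mp this

theorem supp_ycons {p : ℕ} {a : ℕ+} {r : ESp p} {t : EWord}
    (h : t ∈ (ycons p a r).support) : ∃ s ∈ r.support, t = (s.1, a :: s.2) := by
  classical
  have := Finsupp.mapDomain_support h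
  simpa [eq_comm] using Finset.mem_image.mp this

theorem supp_fsum {p : ℕ} {r : ESp p} {g : EWord → ZMod p → ESp p} {t : EWord}
    (h : t ∈ (r.sum g).support) : ∃ w ∈ r.support, t ∈ (g w (r w)).support := by
  classical
  have := Finsupp.support_sum h
  simpa using Finset.mem_biUnion.mp this

theorem supp_decSum {q : ℕ} {p : ℕ} {a b : ℕ+} {f : ℕ+ → ℕ+ → ESp p} {t : EWord}
    (h : t ∈ (decSum q a b f).support) :
    ∃ (i : ℕ+) (j : ℕ+), (i : ℕ) + (j : ℕ) = (a : ℕ) + (b : ℕ) ∧ t ∈ (f i j).support := by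
  classical
  have h2 := Finsupp.support_finset_sum h
  obtain ⟨x, -, hx⟩ := Finset.mem_biUnion.mp h2
  by_cases hd : (q - 1) ∣ (x : ℕ)
  · rw [if_pos hd] at hx
    refine ⟨_, _, ?_, hx⟩
    have := Finset.mem_Ioo.mp x.2
    simp only [PNat.mk_coe]
    omega
  · rw [if_neg hd] at hx
    simp at hx

theorem supp_add {p : ℕ} {r s : ESp p} {t : EWord} (h : t ∈ (r + s).support) :
    t ∈ r.support ∨ t ∈ s.support := by
  classical
  have := Finsupp.support_add (g₁ := r) (g₂ := s) h
  simpa using this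

theorem supp_smul {p : ℕ} {k : ZMod p} {r : ESp p} {t : EWord}
    (h : t ∈ (k • r).support) : t ∈ r.support :=
  Finsupp.support_smul h

theorem supp_single {p : ℕ} {z t : EWord} {k : ZMod p}
    (h : t ∈ (Finsupp.single z k).support) : t = z := by
  classical
  have := Finsupp.support_single_subset h
  simpa using this

theorem supp_ew {p : ℕ} {z t : EWord} (h : t ∈ (ew p z).support) : t = z :=
  supp_single h

end Supp
section Eqns
variable (p q : ℕ)

theorem mulF_nil_left (n : ℕ) (z : EWord) : mulF p q (n + 1) ([], []) z = ew p z := by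
  obtain ⟨_ | _, _ | _⟩ := z <;> rfl

theorem mulF_nil_right (n : ℕ) (w : EWord) : mulF p q (n + 1) w ([], []) = ew p w := by
  obtain ⟨_ | _, _ | _⟩ := w <;> rfl

theorem mulF_xy (n : ℕ) (u v : List ℕ+) : mulF p q (n + 1) (u, []) ([], v) = ew p (u, v) := by
  cases u <;> cases v <;> rfl

theorem mulF_yx (n : ℕ) (u v : List ℕ+) : mulF p q (n + 1) ([], v) (u, []) = ew p (u, v) := by
  cases u <;> cases v <;> rfl

theorem mulF_xx (n : ℕ) (a b : ℕ+) (as bs : List ℕ+) :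
    mulF p q (n + 1) (a :: as, []) (b :: bs, []) =
      xcons p a (mulF p q n (as, []) (b :: bs, [])) +
        xcons p b (mulF p q n (a :: as, []) (bs, [])) +
        xcons p (a + b) (mulF p q n (as, []) (bs, [])) +
        decSum q a b (fun i j =>
          Del p (a : ℕ) (b : ℕ) (i : ℕ) (j : ℕ) •
            xcons p i ((mulF p q n (as, []) (bs, [])).sum fun w c =>
              c • mulF p q n w ([j], []))) := rfl

theorem mulF_yy (n : ℕ) (a b : ℕ+) (as bs : List ℕ+) :
    mulF p q (n + 1) ([], a :: as) ([], b :: bs) =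
      ycons p a (mulF p q n ([], as) ([], b :: bs)) +
        ycons p b (mulF p q n ([], a :: as) ([], bs)) +
        ycons p (a + b) (mulF p q n ([], as) ([], bs)) +
        decSum q a b (fun i j =>
          Del p (a : ℕ) (b : ℕ) (i : ℕ) (j : ℕ) •
            ycons p i ((mulF p q n ([], as) ([], bs)).sum fun w c =>
              c • mulF p q n w ([j], []))) +
        decSum q a b (fun i j =>
          Del p (a : ℕ) (b : ℕ) (i : ℕ) (j : ℕ) •
            ycons p i ((mulF p q n ([], as) ([], bs)).sum fun w c =>
              c • mulF p q n w ([], [j]))) := rfl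

theorem mulF_catch (n : ℕ) (u v u' v' : List ℕ+)
    (h1 : ¬(u = [] ∧ v = [])) (h2 : ¬(u' = [] ∧ v' = []))
    (h3 : ¬(v = [] ∧ u' = [])) (h4 : ¬(u = [] ∧ v' = []))
    (h5 : ¬(v = [] ∧ v' = [])) (h6 : ¬(u = [] ∧ u' = [])) :
    mulF p q (n + 1) (u, v) (u', v') =
      (mulF p q n (u, []) (u', [])).sum fun w c =>
        (mulF p q n ([], v) ([], v')).sum fun z e => (c * e) • mulF p q n w z := by
  cases u <;> cases v <;> cases u' <;> cases v' <;>
    first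
      | rfl
      | (exfalso; simp_all)

end Eqns
section DepthLemma
variable (p q : ℕ)

theorem dep_aux_xx {p q n} (a b : ℕ+) (as bs : List ℕ+)
    (IH : ∀ w z t, t ∈ (mulF p q n w z).support → dep t ≤ dep w + dep z) (t : EWord)
    (h : t ∈ (mulF p q (n + 1) (a :: as, []) (b :: bs, [])).support) :
    dep t ≤ dep (a :: as, []) + dep (b :: bs, []) := by
  rw [mulF_xx] at h
  rcases supp_add h with h | h
  · rcases supp_add h with h | h
    · rcases supp_add h with h | h
      · obtain ⟨s, hs, rfl⟩ := supp_xcons h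
        have := IH _ _ _ hs; simp [dep] at *; omega
      · obtain ⟨s, hs, rfl⟩ := supp_xcons h
        have := IH _ _ _ hs; simp [dep] at *; omega
    · obtain ⟨s, hs, rfl⟩ := supp_xcons h
      have := IH _ _ _ hs; simp [dep] at *; omega
  · obtain ⟨i, j, hij, h⟩ := supp_decSum h
    replace h := supp_smul h
    obtain ⟨s, hs, rfl⟩ := supp_xcons h
    obtain ⟨w₁, hw₁, hs₂⟩ := supp_fsum hs
    replace hs₂ := supp_smul hs₂
    have h1 := IH _ _ _ hw₁
    have h2 := IH _ _ _ hs₂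
    simp [dep] at *; omega

theorem dep_aux_yy {p q n} (a b : ℕ+) (as bs : List ℕ+)
    (IH : ∀ w z t, t ∈ (mulF p q n w z).support → dep t ≤ dep w + dep z) (t : EWord)
    (h : t ∈ (mulF p q (n + 1) ([], a :: as) ([], b :: bs)).support) :
    dep t ≤ dep ([], a :: as) + dep ([], b :: bs) := by
  rw [mulF_yy] at h
  rcases supp_add h with h | h
  · rcases supp_add h with h | h
    · rcases supp_add h with h | h
      · rcases supp_add h with h | h
        · obtain ⟨s, hs, rfl⟩ := supp_ycons h
          have := IH _ _ _ hs; simp [dep] at *; omega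
        · obtain ⟨s, hs, rfl⟩ := supp_ycons h
          have := IH _ _ _ hs; simp [dep] at *; omega
      · obtain ⟨s, hs, rfl⟩ := supp_ycons h
        have := IH _ _ _ hs; simp [dep] at *; omega
    · obtain ⟨i, j, hij, h⟩ := supp_decSum h
      replace h := supp_smul h
      obtain ⟨s, hs, rfl⟩ := supp_ycons h
      obtain ⟨w₁, hw₁, hs₂⟩ := supp_fsum hs
      replace hs₂ := supp_smul hs₂
      have h1 := IH _ _ _ hw₁
      have h2 := IH _ _ _ hs₂
      simp [dep] at *; omega
  · obtain ⟨i, j, hij, h⟩ := supp_decSum h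
    replace h := supp_smul h
    obtain ⟨s, hs, rfl⟩ := supp_ycons h
    obtain ⟨w₁, hw₁, hs₂⟩ := supp_fsum hs
    replace hs₂ := supp_smul hs₂
    have h1 := IH _ _ _ hw₁
    have h2 := IH _ _ _ hs₂
    simp [dep] at *; omega

theorem dep_aux_catch {p q n} (u v u' v' : List ℕ+)
    (IH : ∀ w z t, t ∈ (mulF p q n w z).support → dep t ≤ dep w + dep z) (t : EWord)
    (h : t ∈ ((mulF p q n (u, []) (u', [])).sum fun w c =>
        (mulF p q n ([], v) ([], v')).sum fun z e => (c * e) • mulF p q n w z).support) :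
    dep t ≤ dep (u, v) + dep (u', v') := by
  obtain ⟨w₁, hw₁, h⟩ := supp_fsum h
  obtain ⟨z₁, hz₁, h⟩ := supp_fsum h
  replace h := supp_smul h
  have h1 := IH _ _ _ hw₁
  have h2 := IH _ _ _ hz₁
  have h3 := IH _ _ _ h
  simp [dep] at *; omega


theorem mulF_supp_dep {p q : ℕ} :
    ∀ (n : ℕ) (w z t : EWord), t ∈ (mulF p q n w z).support → dep t ≤ dep w + dep z := by
  intro n
  induction n with
  | zero => intro w z t h; simp [mulF] at h
  | succ n IH =>
    rintro ⟨u, v⟩ ⟨u', v'⟩ t h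
    have base : ∀ w : EWord, t = w → dep t ≤ dep w := fun w hw => hw ▸ le_rfl
    cases u <;> cases v <;> cases u' <;> cases v'
    · rw [mulF_nil_left] at h; have := supp_ew h; subst this; simp [dep]
    · rw [mulF_nil_left] at h; have := supp_ew h; subst this; simp [dep]
    · rw [mulF_nil_left] at h; have := supp_ew h; subst this; simp [dep]
    · rw [mulF_nil_left] at h; have := supp_ew h; subst this; simp [dep]
    · rw [mulF_nil_right] at h; have := supp_ew h; subst this; simp [dep]
    · exact dep_aux_yy _ _ _ _ IH t h
    · rw [mulF_yx] at h; have := supp_ew h; subst this; simp [dep]; try omega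
    · rw [mulF_catch p q n _ _ _ _ (by simp) (by simp) (by simp) (by simp) (by simp)
        (by simp)] at h
      exact dep_aux_catch _ _ _ _ IH t h
    · rw [mulF_nil_right] at h; have := supp_ew h; subst this; simp [dep]
    · rw [mulF_xy] at h; have := supp_ew h; subst this; simp [dep]; try omega
    · exact dep_aux_xx _ _ _ _ IH t h
    · rw [mulF_catch p q n _ _ _ _ (by simp) (by simp) (by simp) (by simp) (by simp)
        (by simp)] at h
      exact dep_aux_catch _ _ _ _ IH t h
    · rw [mulF_nil_right] at h; have := supp_ew h; subst this; simp [dep]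
    · rw [mulF_catch p q n _ _ _ _ (by simp) (by simp) (by simp) (by simp) (by simp)
        (by simp)] at h
      exact dep_aux_catch _ _ _ _ IH t h
    · rw [mulF_catch p q n _ _ _ _ (by simp) (by simp) (by simp) (by simp) (by simp)
        (by simp)] at h
      exact dep_aux_catch _ _ _ _ IH t h
    · rw [mulF_catch p q n _ _ _ _ (by simp) (by simp) (by simp) (by simp) (by simp)
        (by simp)] at h
      exact dep_aux_catch _ _ _ _ IH t h

end DepthLemma
section Purity

theorem mulF_supp_pure {p q : ℕ} :
    ∀ (n : ℕ) (u u' : List ℕ+) (t : EWord),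
      t ∈ (mulF p q n (u, []) (u', [])).support → t.2 = [] := by
  intro n
  induction n with
  | zero => intro u u' t h; simp [mulF] at h
  | succ n IH =>
    intro u u' t h
    cases u with
    | nil => rw [mulF_nil_left] at h; have := supp_ew h; subst this; rfl
    | cons a as =>
      cases u' with
      | nil => rw [mulF_nil_right] at h; have := supp_ew h; subst this; rfl
      | cons b bs =>
        rw [mulF_xx] at h
        rcases supp_add h with h | h
        · rcases supp_add h with h | h
          · rcases supp_add h with h | h
            · obtain ⟨s, hs, rfl⟩ := supp_xcons h; exact (IH _ _ _ hs : _ = [])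
            · obtain ⟨s, hs, rfl⟩ := supp_xcons h; exact (IH _ _ _ hs : _ = [])
          · obtain ⟨s, hs, rfl⟩ := supp_xcons h; exact (IH _ _ _ hs : _ = [])
        · obtain ⟨i, j, hij, h⟩ := supp_decSum h
          replace h := supp_smul h
          obtain ⟨s, hs, rfl⟩ := supp_xcons h
          obtain ⟨w₁, hw₁, hs₂⟩ := supp_fsum hs
          replace hs₂ := supp_smul hs₂
          have hw₁2 : w₁.2 = [] := IH _ _ _ hw₁
          obtain ⟨w₁u, w₁v⟩ := w₁
          simp only at hw₁2
          subst hw₁2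
          exact (IH _ _ _ hs₂ : _ = [])

end Purity
section Stab

/-- Fuel sufficient for the recursion, by shape. -/
def need (w z : EWord) : ℕ :=
  if (w.1 = [] ∧ w.2 = []) ∨ (z.1 = [] ∧ z.2 = []) ∨ (w.2 = [] ∧ z.1 = []) ∨
      (w.1 = [] ∧ z.2 = []) then 1
  else if w.2 = [] then dep w + dep z + 3
  else 2 * (dep w + dep z) + 8

theorem dep_mk (u v : List ℕ+) : dep (u, v) = u.length + v.length := rfl

theorem need_pos (w z : EWord) : 1 ≤ need w z := by
  unfold need; split_ifs <;> omega

theorem need_le_1 (w z : EWord) (h : w.2 = []) : need w z ≤ dep w + dep z + 3 := by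
  unfold need; split_ifs <;> omega

theorem need_le_2 (w z : EWord) : need w z ≤ 2 * (dep w + dep z) + 8 := by
  unfold need; split_ifs <;> omega

theorem need_pat4 (w z : EWord) (h1 : w.2 = []) (h2 : z.1 = []) : need w z = 1 := by
  unfold need; rw [if_pos (Or.inr (Or.inr (Or.inl ⟨h1, h2⟩)))]

theorem decSum_congr {M : Type*} [AddCommMonoid M] {q : ℕ} {a b : ℕ+}
    {f g : ℕ+ → ℕ+ → M} (h : ∀ i j, f i j = g i j) :
    decSum q a b f = decSum q a b g := by
  unfold decSum
  refine Finset.sum_congr rfl fun j _ => ?_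
  split_ifs with hd
  · exact h _ _
  · rfl

theorem step_aux_xx {p q m : ℕ} (a b : ℕ+) (as bs : List ℕ+)
    (IH : ∀ k, k < m + 1 → ∀ w z, need w z ≤ k → mulF p q k w z = mulF p q (k + 1) w z)
    (hm : as.length + 1 + (bs.length + 1) + 3 ≤ m + 1) :
    mulF p q (m + 1) (a :: as, []) (b :: bs, []) =
      mulF p q (m + 2) (a :: as, []) (b :: bs, []) := by
  have hlt : m < m + 1 := Nat.lt_succ_self m
  have e1 : mulF p q m (as, []) (b :: bs, []) = mulF p q (m + 1) (as, []) (b :: bs, []) :=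
    IH m hlt _ _ (le_trans (need_le_1 _ _ rfl) (by simp [dep_mk]; omega))
  have e2 : mulF p q m (a :: as, []) (bs, []) = mulF p q (m + 1) (a :: as, []) (bs, []) :=
    IH m hlt _ _ (le_trans (need_le_1 _ _ rfl) (by simp [dep_mk]; omega))
  have e3 : mulF p q m (as, []) (bs, []) = mulF p q (m + 1) (as, []) (bs, []) :=
    IH m hlt _ _ (le_trans (need_le_1 _ _ rfl) (by simp [dep_mk]; omega))
  rw [mulF_xx p q m, show m + 2 = m + 1 + 1 from rfl, mulF_xx p q (m + 1), e1, e2, e3]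
  congr 1
  apply decSum_congr
  intro i j
  congr 2
  apply Finsupp.sum_congr
  intro w hw
  have hp : w.2 = [] := mulF_supp_pure _ _ _ _ hw
  have hd : dep w ≤ dep (as, []) + dep (bs, []) := mulF_supp_dep _ _ _ _ hw
  congr 1
  exact IH m hlt _ _ (le_trans (need_le_1 _ _ hp) (by simp [dep_mk] at hd ⊢; omega))

set_option maxHeartbeats 1000000 in
theorem step_aux_yy {p q m : ℕ} (a b : ℕ+) (as bs : List ℕ+)
    (IH : ∀ k, k < m + 1 → ∀ w z, need w z ≤ k → mulF p q k w z = mulF p q (k + 1) w z)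
    (hm : 2 * (as.length + 1 + (bs.length + 1)) + 8 ≤ m + 1) :
    mulF p q (m + 1) ([], a :: as) ([], b :: bs) =
      mulF p q (m + 2) ([], a :: as) ([], b :: bs) := by
  have hlt : m < m + 1 := Nat.lt_succ_self m
  have e1 : mulF p q m ([], as) ([], b :: bs) = mulF p q (m + 1) ([], as) ([], b :: bs) :=
    IH m hlt _ _ (le_trans (need_le_2 _ _) (by simp [dep_mk]; omega))
  have e2 : mulF p q m ([], a :: as) ([], bs) = mulF p q (m + 1) ([], a :: as) ([], bs) :=
    IH m hlt _ _ (le_trans (need_le_2 _ _) (by simp [dep_mk]; omega))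
  have e3 : mulF p q m ([], as) ([], bs) = mulF p q (m + 1) ([], as) ([], bs) :=
    IH m hlt _ _ (le_trans (need_le_2 _ _) (by simp [dep_mk]; omega))
  rw [mulF_yy p q m, show m + 2 = m + 1 + 1 from rfl, mulF_yy p q (m + 1), e1, e2, e3]
  congr 1
  · congr 1
    apply decSum_congr
    intro i j
    congr 2
    apply Finsupp.sum_congr
    intro w hw
    have hd : dep w ≤ dep ([], as) + dep ([], bs) := mulF_supp_dep _ _ _ _ hw
    congr 1
    exact IH m hlt _ _ (le_trans (need_le_2 _ _) (by simp [dep_mk] at hd ⊢; omega))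
  · apply decSum_congr
    intro i j
    congr 2
    apply Finsupp.sum_congr
    intro w hw
    have hd : dep w ≤ dep ([], as) + dep ([], bs) := mulF_supp_dep _ _ _ _ hw
    congr 1
    exact IH m hlt _ _ (le_trans (need_le_2 _ _) (by simp [dep_mk] at hd ⊢; omega))

theorem step_aux_catch {p q m : ℕ} (u v u' v' : List ℕ+)
    (IH : ∀ k, k < m + 1 → ∀ w z, need w z ≤ k → mulF p q k w z = mulF p q (k + 1) w z)
    (h1 : ¬(u = [] ∧ v = [])) (h2 : ¬(u' = [] ∧ v' = []))
    (h3 : ¬(v = [] ∧ u' = [])) (h4 : ¬(u = [] ∧ v' = []))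
    (h5 : ¬(v = [] ∧ v' = [])) (h6 : ¬(u = [] ∧ u' = []))
    (hm : u.length + v.length + (u'.length + v'.length) + 3 ≤ m + 1)
    (hmix : v ≠ [] → 2 * (u.length + v.length + (u'.length + v'.length)) + 8 ≤ m + 1) :
    mulF p q (m + 1) (u, v) (u', v') = mulF p q (m + 2) (u, v) (u', v') := by
  have hlt : m < m + 1 := Nat.lt_succ_self m
  have hvv' : v ≠ [] ∨ v' ≠ [] := by
    rcases List.eq_nil_or_concat v with hv | _
    · exact Or.inr fun hv' => h5 ⟨hv, hv'⟩
    · exact Or.inl (by rename_i h; obtain ⟨L, x, rfl⟩ := h; simp)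
  have huu' : u ≠ [] ∨ u' ≠ [] := by
    rcases List.eq_nil_or_concat u with hu | _
    · exact Or.inr fun hu' => h6 ⟨hu, hu'⟩
    · exact Or.inl (by rename_i h; obtain ⟨L, x, rfl⟩ := h; simp)
  have e1 : mulF p q m (u, []) (u', []) = mulF p q (m + 1) (u, []) (u', []) := by
    apply IH m hlt _ _ (le_trans (need_le_1 _ _ rfl) ?_)
    simp only [dep_mk, List.length_nil]
    have : 1 ≤ v.length + v'.length := by
      rcases hvv' with h | h <;> have := List.length_pos_iff.mpr h <;> omega
    omega
  have e2 : mulF p q m ([], v) ([], v') = mulF p q (m + 1) ([], v) ([], v') := by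
    rcases eq_or_ne v [] with rfl | hv
    · apply IH m hlt _ _ ?_
      rw [need_pat4 _ _ rfl rfl]
      omega
    · apply IH m hlt _ _ (le_trans (need_le_2 _ _) ?_)
      have := hmix hv
      have : 1 ≤ u.length + u'.length := by
        rcases huu' with h | h <;> have := List.length_pos_iff.mpr h <;> omega
      simp only [dep_mk, List.length_nil]
      omega
  rw [mulF_catch p q m u v u' v' h1 h2 h3 h4 h5 h6,
    show m + 2 = m + 1 + 1 from rfl, mulF_catch p q (m + 1) u v u' v' h1 h2 h3 h4 h5 h6,
    e1, e2]
  apply Finsupp.sum_congr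
  intro w₁ hw₁
  apply Finsupp.sum_congr
  intro z₁ hz₁
  have hp : w₁.2 = [] := mulF_supp_pure _ _ _ _ hw₁
  have hdw : dep w₁ ≤ dep (u, []) + dep (u', []) := mulF_supp_dep _ _ _ _ hw₁
  congr 1
  rcases eq_or_ne v [] with rfl | hv
  · -- second factor is `ew ([], v')`, so `z₁ = ([], v')`
    rw [mulF_nil_left] at hz₁
    have := supp_ew hz₁
    subst this
    exact IH m hlt _ _ (by rw [need_pat4 _ _ hp rfl]; omega)
  · have hdz : dep z₁ ≤ dep ([], v) + dep ([], v') := mulF_supp_dep _ _ _ _ hz₁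
    apply IH m hlt _ _ (le_trans (need_le_1 _ _ hp) ?_)
    have := hmix hv
    simp only [dep_mk, List.length_nil] at hdw hdz ⊢
    omega

theorem mulF_step {p q : ℕ} :
    ∀ (n : ℕ) (w z : EWord), need w z ≤ n → mulF p q n w z = mulF p q (n + 1) w z := by
  intro n
  induction n using Nat.strong_induction_on with
  | _ n IH =>
    intro w z hn
    match n, hn with
    | 0, hn => exact absurd hn (by have := need_pos w z; omega)
    | (m + 1), hn =>
      obtain ⟨u, v⟩ := w
      obtain ⟨u', v'⟩ := z
      have IH' : ∀ k, k < m + 1 → ∀ w z, need w z ≤ k → mulF p q k w z = mulF p q (k + 1) w z :=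
        fun k hk => IH k (by omega)
      cases u <;> cases v <;> cases u' <;> cases v'
      · rw [mulF_nil_left, mulF_nil_left]
      · rw [mulF_nil_left, mulF_nil_left]
      · rw [mulF_nil_left, mulF_nil_left]
      · rw [mulF_nil_left, mulF_nil_left]
      · rw [mulF_nil_right, mulF_nil_right]
      · exact step_aux_yy _ _ _ _ IH' (by simpa [need, dep_mk] using hn)
      · rw [mulF_yx, mulF_yx]
      · exact step_aux_catch _ _ _ _ IH' (by simp) (by simp) (by simp) (by simp) (by simp)
          (by simp) (by simp [need, dep_mk] at hn ⊢; omega)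
          (fun _ => by simp [need, dep_mk] at hn ⊢; omega)
      · rw [mulF_nil_right, mulF_nil_right]
      · rw [mulF_xy, mulF_xy]
      · exact step_aux_xx _ _ _ _ IH' (by simpa [need, dep_mk] using hn)
      · exact step_aux_catch _ _ _ _ IH' (by simp) (by simp) (by simp) (by simp) (by simp)
          (by simp) (by simp [need, dep_mk] at hn ⊢; omega)
          (fun hv => absurd rfl hv)
      · rw [mulF_nil_right, mulF_nil_right]
      · exact step_aux_catch _ _ _ _ IH' (by simp) (by simp) (by simp) (by simp) (by simp)
          (by simp) (by simp [need, dep_mk] at hn ⊢; omega)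
          (fun _ => by simp [need, dep_mk] at hn ⊢; omega)
      · exact step_aux_catch _ _ _ _ IH' (by simp) (by simp) (by simp) (by simp) (by simp)
          (by simp) (by simp [need, dep_mk] at hn ⊢; omega)
          (fun _ => by simp [need, dep_mk] at hn ⊢; omega)
      · exact step_aux_catch _ _ _ _ IH' (by simp) (by simp) (by simp) (by simp) (by simp)
          (by simp) (by simp [need, dep_mk] at hn ⊢; omega)
          (fun _ => by simp [need, dep_mk] at hn ⊢; omega)

theorem mulF_climb {p q : ℕ} (k : ℕ) :
    ∀ (n : ℕ) (w z : EWord), need w z ≤ n → mulF p q n w z = mulF p q (n + k) w z := by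
  induction k with
  | zero => intro n w z _; rfl
  | succ k IHk =>
    intro n w z h
    rw [IHk n w z h, show n + (k + 1) = n + k + 1 from rfl]
    exact mulF_step (n + k) w z (by omega)

theorem mulF_eq_mulW {p q : ℕ} (n : ℕ) (w z : EWord) (h : need w z ≤ n) :
    mulF p q n w z = mulW p q w z := by
  have hF : need w z ≤ 2 * (dep w + dep z) + 8 := need_le_2 _ _
  have hW : mulW p q w z = mulF p q (2 * (dep w + dep z) + 8) w z := by
    unfold mulW
    congr 1
    obtain ⟨u, v⟩ := w
    obtain ⟨u', v'⟩ := z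
    simp only [dep_mk]
    omega
  rw [hW]
  rcases le_total n (2 * (dep w + dep z) + 8) with hle | hle
  · rw [mulF_climb (2 * (dep w + dep z) + 8 - n) n w z h]
    congr 1
    omega
  · rw [mulF_climb (n - (2 * (dep w + dep z) + 8)) _ w z hF]
    congr 1
    omega

end Stab
section MulWEq
variable (p q : ℕ)

theorem mulW_nil_left (z : EWord) : mulW p q ([], []) z = ew p z := by
  rw [← mulF_eq_mulW 1 _ _ (by simp [need])]
  exact mulF_nil_left p q 0 z

theorem mulW_nil_right (w : EWord) : mulW p q w ([], []) = ew p w := by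
  rw [← mulF_eq_mulW 1 _ _ (by simp [need])]
  exact mulF_nil_right p q 0 w

theorem mulW_xy (u v : List ℕ+) : mulW p q (u, []) ([], v) = ew p (u, v) := by
  rw [← mulF_eq_mulW 1 _ _ (by simp [need])]
  exact mulF_xy p q 0 u v

theorem mulW_yx (u v : List ℕ+) : mulW p q ([], v) (u, []) = ew p (u, v) := by
  rw [← mulF_eq_mulW 1 _ _ (by simp [need])]
  exact mulF_yx p q 0 u v

theorem mulE_unit_right (r : ESp p) : mulE p q r (ew p ([], [])) = r := by
  rw [mulE_ew_right]
  have : ∀ w ∈ r.support, r w • mulW p q w ([], []) = Finsupp.single w (r w) := by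
    intro w _
    rw [mulW_nil_right, ew, Finsupp.smul_single, smul_eq_mul, mul_one]
  rw [Finsupp.sum_congr this, Finsupp.sum_single]

theorem mulE_unit_left (s : ESp p) : mulE p q (ew p ([], [])) s = s := by
  rw [mulE_ew_left]
  have : ∀ z ∈ s.support, s z • mulW p q ([], []) z = Finsupp.single z (s z) := by
    intro z _
    rw [mulW_nil_left, ew, Finsupp.smul_single, smul_eq_mul, mul_one]
  rw [Finsupp.sum_congr this, Finsupp.sum_single]

theorem mulW_supp_dep {p q : ℕ} {w z t : EWord} (h : t ∈ (mulW p q w z).support) :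
    dep t ≤ dep w + dep z := mulF_supp_dep _ _ _ _ h

theorem mulW_supp_pure {p q : ℕ} {u u' : List ℕ+} {t : EWord}
    (h : t ∈ (mulW p q (u, []) (u', [])).support) : t.2 = [] := mulF_supp_pure _ _ _ _ h

set_option maxHeartbeats 1000000 in
/-- Rule (4) for `mulW`, in `mulE` form. -/
theorem mulW_yy (a b : ℕ+) (as bs : List ℕ+) :
    mulW p q ([], a :: as) ([], b :: bs) =
      ycons p a (mulW p q ([], as) ([], b :: bs)) +
        ycons p b (mulW p q ([], a :: as) ([], bs)) +
        ycons p (a + b) (mulW p q ([], as) ([], bs)) +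
        decSum q a b (fun i j =>
          Del p (a : ℕ) (b : ℕ) (i : ℕ) (j : ℕ) •
            ycons p i (mulE p q (mulW p q ([], as) ([], bs)) (ew p ([j], [])))) +
        decSum q a b (fun i j =>
          Del p (a : ℕ) (b : ℕ) (i : ℕ) (j : ℕ) •
            ycons p i (mulE p q (mulW p q ([], as) ([], bs)) (ew p ([], [j])))) := by
  set K := 2 * (as.length + bs.length + 2) + 8 with hK
  have hKb : need ([], a :: as) ([], b :: bs) ≤ K + 1 :=
    le_trans (need_le_2 _ _) (by simp [dep_mk, hK]; try omega)
  rw [← mulF_eq_mulW (K + 1) _ _ hKb, mulF_yy]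
  have e1 : mulF p q K ([], as) ([], b :: bs) = mulW p q ([], as) ([], b :: bs) :=
    mulF_eq_mulW _ _ _ (le_trans (need_le_2 _ _) (by simp [dep_mk, hK]; try omega))
  have e2 : mulF p q K ([], a :: as) ([], bs) = mulW p q ([], a :: as) ([], bs) :=
    mulF_eq_mulW _ _ _ (le_trans (need_le_2 _ _) (by simp [dep_mk, hK]; try omega))
  have e3 : mulF p q K ([], as) ([], bs) = mulW p q ([], as) ([], bs) :=
    mulF_eq_mulW _ _ _ (le_trans (need_le_2 _ _) (by simp [dep_mk, hK]; try omega))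
  rw [e1, e2, e3]
  congr 1
  · congr 1
    apply decSum_congr
    intro i j
    congr 2
    rw [mulE_ew_right]
    apply Finsupp.sum_congr
    intro w hw
    have hd : dep w ≤ dep ([], as) + dep ([], bs) := mulW_supp_dep hw
    congr 1
    exact mulF_eq_mulW _ _ _ (le_trans (need_le_2 _ _) (by simp [dep_mk] at hd ⊢; try omega))
  · apply decSum_congr
    intro i j
    congr 2
    rw [mulE_ew_right]
    apply Finsupp.sum_congr
    intro w hw
    have hd : dep w ≤ dep ([], as) + dep ([], bs) := mulW_supp_dep hw
    congr 1
    exact mulF_eq_mulW _ _ _ (le_trans (need_le_2 _ _) (by simp [dep_mk] at hd ⊢; try omega))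

/-- Rule (5) for `mulW`, universally valid. -/
theorem mulW_split (u v u' v' : List ℕ+) :
    mulW p q (u, v) (u', v') =
      mulE p q (mulW p q (u, []) (u', [])) (mulW p q ([], v) ([], v')) := by
  rcases Decidable.em ((u = [] ∧ v = []) ∨ (u' = [] ∧ v' = []) ∨ (v = [] ∧ u' = []) ∨
      (u = [] ∧ v' = []) ∨ (v = [] ∧ v' = []) ∨ (u = [] ∧ u' = [])) with hbase | hcatch
  · -- the degenerate cases
    rcases hbase with ⟨rfl, rfl⟩ | ⟨rfl, rfl⟩ | ⟨rfl, rfl⟩ | ⟨rfl, rfl⟩ | ⟨rfl, rfl⟩ | ⟨rfl, rfl⟩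
    · rw [mulW_nil_left, mulW_nil_left, mulW_nil_left, mulE_ew_ew, mulW_xy]
    · rw [mulW_nil_right, mulW_nil_right, mulW_nil_right, mulE_ew_ew, mulW_xy]
    · rw [mulW_xy, mulW_nil_right, mulW_nil_left, mulE_ew_ew, mulW_xy]
    · rw [mulW_yx, mulW_nil_left, mulW_nil_right, mulE_ew_ew, mulW_xy]
    · rw [mulW_nil_left p q (([], []) : EWord), mulE_unit_right]
    · rw [mulW_nil_left p q (([], []) : EWord), mulE_unit_left]
  · have h1 : ¬(u = [] ∧ v = []) := fun h => hcatch (Or.inl h)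
    have h2 : ¬(u' = [] ∧ v' = []) := fun h => hcatch (Or.inr (Or.inl h))
    have h3 : ¬(v = [] ∧ u' = []) := fun h => hcatch (Or.inr (Or.inr (Or.inl h)))
    have h4 : ¬(u = [] ∧ v' = []) := fun h => hcatch (Or.inr (Or.inr (Or.inr (Or.inl h))))
    have h5 : ¬(v = [] ∧ v' = []) :=
      fun h => hcatch (Or.inr (Or.inr (Or.inr (Or.inr (Or.inl h)))))
    have h6 : ¬(u = [] ∧ u' = []) :=
      fun h => hcatch (Or.inr (Or.inr (Or.inr (Or.inr (Or.inr h)))))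
    have huu' : 1 ≤ u.length + u'.length := by
      rcases eq_or_ne u [] with rfl | hu
      · have : u' ≠ [] := fun hu' => h6 ⟨rfl, hu'⟩
        have := List.length_pos_iff.mpr this; omega
      · have := List.length_pos_iff.mpr hu; omega
    set K := 2 * (u.length + v.length + u'.length + v'.length) + 8 with hK
    have hKb : need (u, v) (u', v') ≤ K + 1 :=
      le_trans (need_le_2 _ _) (by simp [dep_mk, hK]; try omega)
    rw [← mulF_eq_mulW (K + 1) _ _ hKb, mulF_catch p q K u v u' v' h1 h2 h3 h4 h5 h6]
    have e1 : mulF p q K (u, []) (u', []) = mulW p q (u, []) (u', []) :=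
      mulF_eq_mulW _ _ _ (le_trans (need_le_1 _ _ rfl) (by simp [dep_mk, hK]; try omega))
    have e2 : mulF p q K ([], v) ([], v') = mulW p q ([], v) ([], v') :=
      mulF_eq_mulW _ _ _ (le_trans (need_le_2 _ _) (by simp [dep_mk, hK]; try omega))
    rw [e1, e2, mulE_def]
    apply Finsupp.sum_congr
    intro w₁ hw₁
    apply Finsupp.sum_congr
    intro z₁ hz₁
    have hp : w₁.2 = [] := mulW_supp_pure hw₁
    have hdw : dep w₁ ≤ dep (u, []) + dep (u', []) := mulW_supp_dep hw₁
    have hdz : dep z₁ ≤ dep ([], v) + dep ([], v') := mulW_supp_dep hz₁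
    congr 1
    exact mulF_eq_mulW _ _ _ (le_trans (need_le_1 _ _ hp)
      (by simp [dep_mk, hK] at hdw hdz ⊢; omega))


end MulWEq
section PureX
variable (p q : ℕ)

/-- Elements supported on pure-`x` words. -/
def pureX {p : ℕ} (r : ESp p) : Prop := ∀ t ∈ r.support, t.2 = ([] : List ℕ+)

theorem pureX_ew (u : List ℕ+) : pureX (ew p (u, [])) := by
  intro t ht; rw [supp_ew ht]

theorem pureX_mulW (u u' : List ℕ+) : pureX (mulW p q (u, []) (u', [])) :=
  fun _ ht => mulW_supp_pure ht

theorem pureX_mulE {p q : ℕ} {r s : ESp p} (hr : pureX r) (hs : pureX s) :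
    pureX (mulE p q r s) := by
  intro t ht
  rw [mulE_def] at ht
  obtain ⟨w₁, hw₁, ht⟩ := supp_fsum ht
  obtain ⟨z₁, hz₁, ht⟩ := supp_fsum ht
  replace ht := supp_smul ht
  have h1 : w₁.2 = [] := hr _ hw₁
  have h2 : z₁.2 = [] := hs _ hz₁
  obtain ⟨wu, wv⟩ := w₁; obtain ⟨zu, zv⟩ := z₁
  simp only at h1 h2
  subst h1; subst h2
  exact mulW_supp_pure ht

theorem pureX_sub {p : ℕ} {r s : ESp p} (hr : pureX r) (hs : pureX s) :
    pureX (r - s) := by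
  intro t ht
  have := Finsupp.support_sub (f := r) (g := s) ht
  rcases Finset.mem_union.mp this with h | h
  · exact hr _ h
  · exact hs _ h

theorem esp_decomp {p : ℕ} (r : ESp p) : r = ∑ w ∈ r.support, r w • ew p w := by
  conv_lhs => rw [← Finsupp.sum_single r]
  rw [Finsupp.sum]
  refine Finset.sum_congr rfl fun w _ => ?_
  rw [ew, Finsupp.smul_single, smul_eq_mul, mul_one]

/-- Linearly extend an identity on pure-`x` basis words to pure-`x` elements. -/
theorem pureX_ext {p : ℕ} (F G : ESp p →ₗ[ZMod p] ESp p)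
    (h : ∀ u : List ℕ+, F (ew p (u, [])) = G (ew p (u, [])))
    {r : ESp p} (hr : pureX r) : F r = G r := by
  rw [esp_decomp r, map_sum, map_sum]
  refine Finset.sum_congr rfl fun w hw => ?_
  rw [map_smul, map_smul]
  obtain ⟨wu, wv⟩ := w
  have h2 : wv = [] := hr _ hw
  subst h2
  rw [h]

/-- `r ↦ mulE r s` as a linear map. -/
noncomputable def mulEL (s : ESp p) : ESp p →ₗ[ZMod p] ESp p where
  toFun r := mulE p q r s
  map_add' r r' := mulE_add_left p q r r' s
  map_smul' k r := mulE_smul_left p q k r s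

/-- `s ↦ mulE r s` as a linear map. -/
noncomputable def mulER (r : ESp p) : ESp p →ₗ[ZMod p] ESp p where
  toFun s := mulE p q r s
  map_add' s s' := mulE_add_right p q r s s'
  map_smul' k s := mulE_smul_right p q k r s

/-- `ycons` as a linear map. -/
noncomputable def yconsL (c : ℕ+) : ESp p →ₗ[ZMod p] ESp p where
  toFun r := ycons p c r
  map_add' r r' := ycons_add p c r r'
  map_smul' k r := ycons_smul p c k r

@[simp] theorem mulEL_apply (s r : ESp p) : mulEL p q s r = mulE p q r s := rfl
@[simp] theorem mulER_apply (r s : ESp p) : mulER p q r s = mulE p q r s := rfl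
@[simp] theorem yconsL_apply (c : ℕ+) (r : ESp p) : yconsL p c r = ycons p c r := rfl

/-- Splitting off the `y`-part of a word in a right factor (rule (5), element form). -/
theorem mulE_split_word {p q : ℕ} {r : ESp p} (hr : pureX r) (u₂ v₂ : List ℕ+) :
    mulE p q r (ew p (u₂, v₂)) =
      mulE p q (mulE p q r (ew p (u₂, []))) (ew p ([], v₂)) := by
  have := pureX_ext (mulEL p q (ew p (u₂, v₂)))
    ((mulEL p q (ew p ([], v₂))).comp (mulEL p q (ew p (u₂, []))))
    (fun w => ?_) hr
  · simpa using this
  · simp only [mulEL_apply, LinearMap.comp_apply]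
    rw [mulE_ew_ew, mulE_ew_ew, mulW_split p q w [] u₂ v₂, mulW_nil_left]

/-- `x`-associativity under a trailing pure-`y` factor. -/
theorem mulE_xassoc {p q : ℕ} {r s : ESp p} (hr : pureX r) (hs : pureX s) (v : List ℕ+) :
    mulE p q r (mulE p q s (ew p ([], v))) =
      mulE p q (mulE p q r s) (ew p ([], v)) := by
  -- first extend over `s` for fixed pure-`x` word `r`; then extend over `r`.
  suffices h : ∀ u₃ : List ℕ+,
      mulE p q r (mulE p q (ew p (u₃, [])) (ew p ([], v))) =
        mulE p q (mulE p q r (ew p (u₃, []))) (ew p ([], v)) by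
    have := pureX_ext ((mulER p q r).comp (mulEL p q (ew p ([], v))))
      ((mulEL p q (ew p ([], v))).comp (mulER p q r)) (fun u₃ => by
        simpa using h u₃) hs
    simpa using this
  intro u₃
  have := pureX_ext (mulEL p q (mulE p q (ew p (u₃, [])) (ew p ([], v))))
    ((mulEL p q (ew p ([], v))).comp (mulEL p q (ew p (u₃, [])))) (fun w => ?_) hr
  · simpa using this
  · simp only [mulEL_apply, LinearMap.comp_apply]
    rw [mulE_ew_ew, mulW_xy, mulE_ew_ew, mulW_split p q w [] u₃ v, mulW_nil_left,
      mulE_ew_ew]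

/-- Exchanging a pure-`y` append with a single `x`-letter product. -/
theorem mulE_swap_xj {p q : ℕ} {s : ESp p} (hs : pureX s) (v : List ℕ+) (j : ℕ+) :
    mulE p q (mulE p q s (ew p ([], v))) (ew p ([j], [])) =
      mulE p q (mulE p q s (ew p ([j], []))) (ew p ([], v)) := by
  have := pureX_ext ((mulEL p q (ew p ([j], []))).comp (mulEL p q (ew p ([], v))))
    ((mulEL p q (ew p ([], v))).comp (mulEL p q (ew p ([j], [])))) (fun w => ?_) hs
  · simpa using this
  · simp only [mulEL_apply, LinearMap.comp_apply]
    rw [mulE_ew_ew, mulW_xy, mulE_ew_ew, mulW_split p q w v [j] [], mulW_yx, mulE_ew_ew]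

/-- Absorbing a pure-`y` append into a single `y`-letter product. -/
theorem mulE_absorb_yj {p q : ℕ} {s : ESp p} (hs : pureX s) (v : List ℕ+) (j : ℕ+) :
    mulE p q (mulE p q s (ew p ([], v))) (ew p ([], [j])) =
      mulE p q s (mulW p q ([], v) ([], [j])) := by
  have := pureX_ext ((mulEL p q (ew p ([], [j]))).comp (mulEL p q (ew p ([], v))))
    (mulEL p q (mulW p q ([], v) ([], [j]))) (fun w => ?_) hs
  · simpa using this
  · simp only [mulEL_apply, LinearMap.comp_apply]
    rw [mulE_ew_ew, mulW_xy, mulE_ew_ew, mulW_split p q w v [] [j], mulW_nil_right]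

/-- `ycons` commutes with appending to a pure-`x` element. -/
theorem ycons_mulE_pureY {p q : ℕ} {r : ESp p} (hr : pureX r) (c : ℕ+) (v : List ℕ+) :
    ycons p c (mulE p q r (ew p ([], v))) = mulE p q r (ew p ([], c :: v)) := by
  have := pureX_ext ((yconsL p c).comp (mulEL p q (ew p ([], v))))
    (mulEL p q (ew p ([], c :: v))) (fun w => ?_) hr
  · simpa using this
  · simp only [mulEL_apply, LinearMap.comp_apply, yconsL_apply]
    rw [mulE_ew_ew, mulW_xy, mulE_ew_ew, mulW_xy, ycons_ew]

/-- `ycons` moves through multiplication by a pure-`x` element. -/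
theorem mulE_ycons {p q : ℕ} {r : ESp p} (hr : pureX r) (c : ℕ+) (t : ESp p) :
    mulE p q r (ycons p c t) = ycons p c (mulE p q r t) := by
  induction t using Finsupp.induction_linear with
  | zero => rw [ycons_zero, mulE_zero_right, ycons_zero]
  | add f g hf hg => rw [ycons_add, mulE_add_right, hf, hg, mulE_add_right, ycons_add]
  | single z k =>
    have hz : Finsupp.single z k = k • ew p z := by
      rw [ew, Finsupp.smul_single, smul_eq_mul, mul_one]
    rw [hz, ycons_smul, mulE_smul_right, mulE_smul_right, ycons_smul]
    congr 1
    obtain ⟨zu, zv⟩ := z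
    rw [ycons_ew]
    rw [mulE_split_word hr zu zv, mulE_split_word hr zu (c :: zv),
      ycons_mulE_pureY (pureX_mulE hr (pureX_ew p zu)) c zv]

end PureX
section Assoc3
variable (p q : ℕ)

theorem InA_neg {p q : ℕ} {r : ESp p} (h : InA p q r) : InA p q (-r) := by
  have := InA.smul (-1 : ZMod p) h
  simpa using this

theorem InA_of_eq {p q : ℕ} {r s : ESp p} (h : InA p q r) (e : r = s) : InA p q s := e ▸ h

/-- The key associator lemma: `y_i (r * (s * t) - (r * s) * t) ∈ 𝔄`
for pure-`x` elements `r`, `s`. -/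
theorem assoc3 {p q : ℕ} {r s : ESp p} (hr : pureX r) (hs : pureX s) (i : ℕ+) (t : ESp p) :
    InA p q (ycons p i (mulE p q r (mulE p q s t) - mulE p q (mulE p q r s) t)) := by
  induction t using Finsupp.induction_linear with
  | zero =>
    simp only [mulE_zero_right, mulE_zero_left, sub_zero, ycons_zero]
    exact InA.zero
  | add f g hf hg =>
    simp only [mulE_add_right, mulE_add_left]
    rw [add_sub_add_comm, ycons_add]
    exact InA.add hf hg
  | single z k =>
    have hz : Finsupp.single z k = k • ew p z := by
      rw [ew, Finsupp.smul_single, smul_eq_mul, mul_one]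
    rw [hz]
    simp only [mulE_smul_right, mulE_smul_left]
    rw [← smul_sub, ycons_smul]
    apply InA.smul
    obtain ⟨u₃, v₃⟩ := z
    have hx₃ : pureX (ew p (u₃, [])) := pureX_ew p u₃
    have e1 : mulE p q s (ew p (u₃, v₃)) =
        mulE p q (mulE p q s (ew p (u₃, []))) (ew p ([], v₃)) := mulE_split_word hs u₃ v₃
    have e2 : mulE p q r (mulE p q (mulE p q s (ew p (u₃, []))) (ew p ([], v₃))) =
        mulE p q (mulE p q r (mulE p q s (ew p (u₃, [])))) (ew p ([], v₃)) :=
      mulE_xassoc hr (pureX_mulE hs hx₃) v₃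
    have e3 : mulE p q (mulE p q r s) (ew p (u₃, v₃)) =
        mulE p q (mulE p q (mulE p q r s) (ew p (u₃, []))) (ew p ([], v₃)) :=
      mulE_split_word (pureX_mulE hr hs) u₃ v₃
    rw [e1, e2, e3, ← mulE_sub_left]
    rw [ycons_mulE_pureY (pureX_sub (pureX_mulE hr (pureX_mulE hs hx₃))
      (pureX_mulE (pureX_mulE hr hs) hx₃)) i v₃]
    apply InA.mul_right
    have h := InA.assoc (p := p) (q := q) r s (ew p (u₃, []))
    have := InA_neg h
    rwa [neg_sub] at this

/-- `y_i (r * (t * x_j) - (r * t) * x_j) ∈ 𝔄` for pure-`x` `r`. -/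
theorem assoc3x {p q : ℕ} {r : ESp p} (hr : pureX r) (i j : ℕ+) (t : ESp p) :
    InA p q (ycons p i (mulE p q r (mulE p q t (ew p ([j], []))) -
      mulE p q (mulE p q r t) (ew p ([j], [])))) := by
  induction t using Finsupp.induction_linear with
  | zero =>
    simp only [mulE_zero_right, mulE_zero_left, sub_zero, ycons_zero]
    exact InA.zero
  | add f g hf hg =>
    simp only [mulE_add_right, mulE_add_left]
    rw [add_sub_add_comm, ycons_add]
    exact InA.add hf hg
  | single z k =>
    have hz : Finsupp.single z k = k • ew p z := by
      rw [ew, Finsupp.smul_single, smul_eq_mul, mul_one]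
    rw [hz]
    simp only [mulE_smul_right, mulE_smul_left]
    rw [← smul_sub, ycons_smul]
    apply InA.smul
    obtain ⟨u₂, v₂⟩ := z
    have hx₂ : pureX (ew p (u₂, [])) := pureX_ew p u₂
    have hS₂ : pureX (mulE p q (ew p (u₂, [])) (ew p ([j], []))) :=
      pureX_mulE hx₂ (pureX_ew p [j])
    have e1 : mulE p q (ew p (u₂, v₂)) (ew p ([j], [])) =
        mulE p q (mulE p q (ew p (u₂, [])) (ew p ([j], []))) (ew p ([], v₂)) := by
      rw [mulE_ew_ew, mulW_split p q u₂ v₂ [j] [], mulW_nil_right, mulE_ew_ew]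
    have e2 : mulE p q r (mulE p q (mulE p q (ew p (u₂, [])) (ew p ([j], []))) (ew p ([], v₂))) =
        mulE p q (mulE p q r (mulE p q (ew p (u₂, [])) (ew p ([j], [])))) (ew p ([], v₂)) :=
      mulE_xassoc hr hS₂ v₂
    have e3 : mulE p q r (ew p (u₂, v₂)) =
        mulE p q (mulE p q r (ew p (u₂, []))) (ew p ([], v₂)) := mulE_split_word hr u₂ v₂
    have e4 : mulE p q (mulE p q (mulE p q r (ew p (u₂, []))) (ew p ([], v₂))) (ew p ([j], [])) =
        mulE p q (mulE p q (mulE p q r (ew p (u₂, []))) (ew p ([j], []))) (ew p ([], v₂)) :=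
      mulE_swap_xj (pureX_mulE hr hx₂) v₂ j
    rw [e1, e2, e3, e4, ← mulE_sub_left]
    rw [ycons_mulE_pureY (pureX_sub (pureX_mulE hr hS₂)
      (pureX_mulE (pureX_mulE hr hx₂) (pureX_ew p [j]))) i v₂]
    apply InA.mul_right
    have h := InA.assoc (p := p) (q := q) r (ew p (u₂, [])) (ew p ([j], []))
    have := InA_neg h
    rwa [neg_sub] at this

/-- `y_i (r * (t * y_j) - (r * t) * y_j) ∈ 𝔄` for pure-`x` `r`. -/
theorem assoc3y {p q : ℕ} {r : ESp p} (hr : pureX r) (i j : ℕ+) (t : ESp p) :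
    InA p q (ycons p i (mulE p q r (mulE p q t (ew p ([], [j]))) -
      mulE p q (mulE p q r t) (ew p ([], [j])))) := by
  induction t using Finsupp.induction_linear with
  | zero =>
    simp only [mulE_zero_right, mulE_zero_left, sub_zero, ycons_zero]
    exact InA.zero
  | add f g hf hg =>
    simp only [mulE_add_right, mulE_add_left]
    rw [add_sub_add_comm, ycons_add]
    exact InA.add hf hg
  | single z k =>
    have hz : Finsupp.single z k = k • ew p z := by
      rw [ew, Finsupp.smul_single, smul_eq_mul, mul_one]
    rw [hz]
    simp only [mulE_smul_right, mulE_smul_left]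
    rw [← smul_sub, ycons_smul]
    apply InA.smul
    obtain ⟨u₂, v₂⟩ := z
    have hx₂ : pureX (ew p (u₂, [])) := pureX_ew p u₂
    have e1 : mulE p q (ew p (u₂, v₂)) (ew p ([], [j])) =
        mulE p q (ew p (u₂, [])) (mulW p q ([], v₂) ([], [j])) := by
      rw [mulE_ew_ew, mulW_split p q u₂ v₂ [] [j], mulW_nil_right]
    have e3 : mulE p q r (ew p (u₂, v₂)) =
        mulE p q (mulE p q r (ew p (u₂, []))) (ew p ([], v₂)) := mulE_split_word hr u₂ v₂
    have e4 : mulE p q (mulE p q (mulE p q r (ew p (u₂, []))) (ew p ([], v₂))) (ew p ([], [j])) =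
        mulE p q (mulE p q r (ew p (u₂, []))) (mulW p q ([], v₂) ([], [j])) :=
      mulE_absorb_yj (pureX_mulE hr hx₂) v₂ j
    rw [e1, e3, e4]
    exact assoc3 hr hx₂ i (mulW p q ([], v₂) ([], [j]))

end Assoc3
section MainWord
variable (p q : ℕ)

theorem decSum_add {M : Type*} [AddCommMonoid M] {q : ℕ} {a b : ℕ+} (f g : ℕ+ → ℕ+ → M) :
    decSum q a b (fun i j => f i j + g i j) = decSum q a b f + decSum q a b g := by
  unfold decSum
  rw [← Finset.sum_add_distrib]
  refine Finset.sum_congr rfl fun x _ => ?_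
  split_ifs <;> simp

theorem decSum_sub {M : Type*} [SubtractionCommMonoid M] {q : ℕ} {a b : ℕ+}
    (f g : ℕ+ → ℕ+ → M) :
    decSum q a b (fun i j => f i j - g i j) = decSum q a b f - decSum q a b g := by
  unfold decSum
  rw [← Finset.sum_sub_distrib]
  refine Finset.sum_congr rfl fun x _ => ?_
  split_ifs <;> simp

theorem decSum_sum {M : Type*} [AddCommMonoid M] {q : ℕ} {a b : ℕ+} {ι : Type*}
    (s : Finset ι) (f : ι → ℕ+ → ℕ+ → M) :
    decSum q a b (fun i j => ∑ k ∈ s, f k i j) = ∑ k ∈ s, decSum q a b (f k) := by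
  unfold decSum
  rw [Finset.sum_comm]
  refine Finset.sum_congr rfl fun x _ => ?_
  split_ifs <;> simp

theorem mulE_decSum_right {p q : ℕ} (r : ESp p) {qq : ℕ} {a b : ℕ+} (f : ℕ+ → ℕ+ → ESp p) :
    mulE p q r (decSum qq a b f) = decSum qq a b (fun i j => mulE p q r (f i j)) := by
  unfold decSum
  rw [mulE_sum_right]
  refine Finset.sum_congr rfl fun x _ => ?_
  split_ifs
  · rfl
  · exact mulE_zero_right p q r

theorem InA_sum {p q : ℕ} {ι : Type*} (s : Finset ι) (f : ι → ESp p)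
    (h : ∀ i ∈ s, InA p q (f i)) : InA p q (∑ i ∈ s, f i) :=
  Finset.sum_induction f _ (fun _ _ => InA.add) InA.zero h

theorem InA_decSum {p q : ℕ} {qq : ℕ} {a b : ℕ+} {f : ℕ+ → ℕ+ → ESp p}
    (h : ∀ i j, InA p q (f i j)) : InA p q (decSum qq a b f) := by
  unfold decSum
  refine InA_sum _ _ fun x _ => ?_
  split_ifs
  · exact h _ _
  · exact InA.zero

/-- The word-level form of the main proposition. -/
theorem main_word {p q : ℕ} (a b : ℕ+) (u v u' v' : List ℕ+) :
    InA p q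
      (mulW p q (u, a :: v) (u', b :: v') -
        (ycons p a (mulW p q (u, v) (u', b :: v')) +
          ycons p b (mulW p q (u, a :: v) (u', v')) +
          ycons p (a + b) (mulW p q (u, v) (u', v')) +
          decSum q a b (fun i j =>
            Del p (a : ℕ) (b : ℕ) (i : ℕ) (j : ℕ) •
              ycons p i
                (mulE p q (mulW p q (u, v) (u', v'))
                  (ew p ([j], []) + ew p ([], [j])))))) := by
  have hRp : pureX (mulW p q (u, []) (u', [])) := pureX_mulW p q u u'
  set R := mulW p q (u, []) (u', []) with hR
  set Y := mulW p q ([], v) ([], v') with hY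
  have eL : mulW p q (u, a :: v) (u', b :: v') =
      ycons p a (mulW p q (u, v) (u', b :: v')) +
        ycons p b (mulW p q (u, a :: v) (u', v')) +
        ycons p (a + b) (mulW p q (u, v) (u', v')) +
        decSum q a b (fun i j =>
          Del p (a : ℕ) (b : ℕ) (i : ℕ) (j : ℕ) •
            ycons p i (mulE p q R (mulE p q Y (ew p ([j], []))))) +
        decSum q a b (fun i j =>
          Del p (a : ℕ) (b : ℕ) (i : ℕ) (j : ℕ) •
            ycons p i (mulE p q R (mulE p q Y (ew p ([], [j]))))) := by
    rw [mulW_split p q u (a :: v) u' (b :: v'), mulW_yy]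
    rw [mulE_add_right, mulE_add_right, mulE_add_right, mulE_add_right]
    rw [mulE_ycons hRp, mulE_ycons hRp, mulE_ycons hRp]
    rw [← mulW_split p q u v u' (b :: v'), ← mulW_split p q u (a :: v) u' v',
      ← mulW_split p q u v u' v']
    rw [mulE_decSum_right, mulE_decSum_right]
    congr 1
    · congr 1
      apply decSum_congr
      intro i j
      rw [mulE_smul_right, mulE_ycons hRp]
    · apply decSum_congr
      intro i j
      rw [mulE_smul_right, mulE_ycons hRp]
  have eR : decSum q a b (fun i j =>
        Del p (a : ℕ) (b : ℕ) (i : ℕ) (j : ℕ) •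
          ycons p i (mulE p q (mulW p q (u, v) (u', v'))
            (ew p ([j], []) + ew p ([], [j])))) =
      decSum q a b (fun i j =>
        Del p (a : ℕ) (b : ℕ) (i : ℕ) (j : ℕ) •
          ycons p i (mulE p q (mulE p q R Y) (ew p ([j], [])))) +
        decSum q a b (fun i j =>
          Del p (a : ℕ) (b : ℕ) (i : ℕ) (j : ℕ) •
            ycons p i (mulE p q (mulE p q R Y) (ew p ([], [j])))) := by
    rw [mulW_split p q u v u' v', ← decSum_add]
    apply decSum_congr
    intro i j
    rw [mulE_add_right, ycons_add, smul_add]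
  rw [eL, eR]
  have heq : ∀ A B C D1 D2 E1 E2 : ESp p,
      A + B + C + D1 + D2 - (A + B + C + (E1 + E2)) = (D1 - E1) + (D2 - E2) := by
    intros; abel
  rw [heq]
  refine InA.add ?_ ?_
  · rw [← decSum_sub]
    refine InA_decSum fun i j => ?_
    rw [← smul_sub, ← ycons_sub]
    exact InA.smul _ (assoc3x hRp i j Y)
  · rw [← decSum_sub]
    refine InA_decSum fun i j => ?_
    rw [← smul_sub, ← ycons_sub]
    exact InA.smul _ (assoc3y hRp i j Y)

end MainWord

/-- **Proposition.** For all `a, b ∈ ℕ` and all indices `𝔞, 𝔟`, modulo the associator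
ideal `𝔄`:
`(y_a e(x_𝔞)) * (y_b e(x_𝔟)) ≡ y_a(e(x_𝔞) * (y_b e(x_𝔟))) + y_b((y_a e(x_𝔞)) * e(x_𝔟))
  + y_{a+b}(e(x_𝔞) * e(x_𝔟))
  + ∑_{i+j=a+b, (q-1)∣j} Δ^{i,j}_{a,b} y_i((e(x_𝔞) * e(x_𝔟)) * e(x_j))`,
where `e(x_j) = x_j + y_j`. -/
theorem ye_mul_ye_mod_assoc (p q : ℕ) [Fact p.Prime] (n : ℕ) (hn : 0 < n) (hq : q = p ^ n)
    (a b : ℕ+) (A B : List ℕ+) :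
    InA p q
      (mulE p q (ycons p a (eWord p A)) (ycons p b (eWord p B)) -
        (ycons p a (mulE p q (eWord p A) (ycons p b (eWord p B))) +
          ycons p b (mulE p q (ycons p a (eWord p A)) (eWord p B)) +
          ycons p (a + b) (mulE p q (eWord p A) (eWord p B)) +
          decSum q a b (fun i j =>
            Del p (a : ℕ) (b : ℕ) (i : ℕ) (j : ℕ) •
              ycons p i
                (mulE p q (mulE p q (eWord p A) (eWord p B))
                  (ew p ([j], []) + ew p ([], [j])))))) := by
  classical
  unfold eWord
  set SA := Finset.range (A.length + 1) with hSA
  set SB := Finset.range (B.length + 1) with hSB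
  have eAB : mulE p q (∑ k ∈ SA, ew p (A.drop k, A.take k))
        (∑ k' ∈ SB, ew p (B.drop k', B.take k')) =
      ∑ k ∈ SA, ∑ k' ∈ SB, mulW p q (A.drop k, A.take k) (B.drop k', B.take k') := by
    rw [mulE_sum_left]
    refine Finset.sum_congr rfl fun k _ => ?_
    rw [mulE_sum_right]
    exact Finset.sum_congr rfl fun k' _ => mulE_ew_ew p q _ _
  have e0 : mulE p q (ycons p a (∑ k ∈ SA, ew p (A.drop k, A.take k)))
        (ycons p b (∑ k' ∈ SB, ew p (B.drop k', B.take k'))) =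
      ∑ k ∈ SA, ∑ k' ∈ SB,
        mulW p q (A.drop k, a :: A.take k) (B.drop k', b :: B.take k') := by
    rw [ycons_finset_sum, ycons_finset_sum, mulE_sum_left]
    refine Finset.sum_congr rfl fun k _ => ?_
    rw [mulE_sum_right]
    refine Finset.sum_congr rfl fun k' _ => ?_
    rw [ycons_ew, ycons_ew, mulE_ew_ew]
  have e1 : ycons p a (mulE p q (∑ k ∈ SA, ew p (A.drop k, A.take k))
        (ycons p b (∑ k' ∈ SB, ew p (B.drop k', B.take k')))) =
      ∑ k ∈ SA, ∑ k' ∈ SB,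
        ycons p a (mulW p q (A.drop k, A.take k) (B.drop k', b :: B.take k')) := by
    rw [ycons_finset_sum p b, mulE_sum_left, ycons_finset_sum]
    refine Finset.sum_congr rfl fun k _ => ?_
    rw [mulE_sum_right, ycons_finset_sum]
    refine Finset.sum_congr rfl fun k' _ => ?_
    rw [ycons_ew, mulE_ew_ew]
  have e2 : ycons p b (mulE p q (ycons p a (∑ k ∈ SA, ew p (A.drop k, A.take k)))
        (∑ k' ∈ SB, ew p (B.drop k', B.take k'))) =
      ∑ k ∈ SA, ∑ k' ∈ SB,
        ycons p b (mulW p q (A.drop k, a :: A.take k) (B.drop k', B.take k')) := by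
    rw [ycons_finset_sum p a, mulE_sum_left, ycons_finset_sum]
    refine Finset.sum_congr rfl fun k _ => ?_
    rw [mulE_sum_right, ycons_finset_sum]
    refine Finset.sum_congr rfl fun k' _ => ?_
    rw [ycons_ew, mulE_ew_ew]
  have e3 : ycons p (a + b) (mulE p q (∑ k ∈ SA, ew p (A.drop k, A.take k))
        (∑ k' ∈ SB, ew p (B.drop k', B.take k'))) =
      ∑ k ∈ SA, ∑ k' ∈ SB,
        ycons p (a + b) (mulW p q (A.drop k, A.take k) (B.drop k', B.take k')) := by
    rw [eAB, ycons_finset_sum]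
    refine Finset.sum_congr rfl fun k _ => ?_
    rw [ycons_finset_sum]
  have e4 : decSum q a b (fun i j =>
        Del p (a : ℕ) (b : ℕ) (i : ℕ) (j : ℕ) •
          ycons p i
            (mulE p q (mulE p q (∑ k ∈ SA, ew p (A.drop k, A.take k))
                (∑ k' ∈ SB, ew p (B.drop k', B.take k')))
              (ew p ([j], []) + ew p ([], [j])))) =
      ∑ k ∈ SA, ∑ k' ∈ SB,
        decSum q a b (fun i j =>
          Del p (a : ℕ) (b : ℕ) (i : ℕ) (j : ℕ) •
            ycons p i
              (mulE p q (mulW p q (A.drop k, A.take k) (B.drop k', B.take k'))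
                (ew p ([j], []) + ew p ([], [j])))) := by
    rw [eAB]
    simp only [mulE_sum_left, ycons_finset_sum, Finset.smul_sum, decSum_sum]
  rw [e0, e1, e2, e3, e4]
  have base := InA_sum SA _ (fun k (_ : k ∈ SA) => InA_sum SB _
    (fun k' (_ : k' ∈ SB) =>
      main_word (p := p) (q := q) a b (A.drop k) (A.take k) (B.drop k') (B.take k')))
  refine InA_of_eq base ?_
  simp only [Finset.sum_sub_distrib, Finset.sum_add_distrib]
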